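/- (Robbins–Siegmund-type supermartingale convergence) Let (Ω, F, P) be a probability space and {F_k}_{k≥1} an increasing sequence of sub-σ-algebras of F. Let {h_k}, {v_k}, {w_k} be sequences of integrable real random variables such that h_k, v_k, w_k are F_k-measurable for each k, v_k ≥ 0 and w_k ≥ 0 for all k, ∑_{k=1}^∞ w_k < ∞ almost surely, and {h_k} is uniformly bounded from below by a constant. Suppose there are constants η_k ≥ 0 with ∑_{k=1}^∞ η_k < ∞ such that, with probability one, E[h_{k+1} | F_k] ≤ (1 + η_k) h_k − v_k + w_k for all k ≥ 1. Then h_k converges almost surely to a finite random variable and ∑_{k=1}^∞ v_k < ∞ almost surely. -/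

import Mathlib

open MeasureTheory Filter
open scoped Topology ENNReal NNReal

namespace RSaux

variable {Ω : Type*} {m0 : MeasurableSpace Ω} {μ : MeasureTheory.Measure Ω}
  {ℱ : Filtration ℕ m0} {f u : ℕ → Ω → ℝ} {r : ℝ}

theorem hit_eq_min (π : Ω → ℕ) (r : ℝ) (ω : Ω) {n : ℕ} (hπn : ∀ ω, π ω ≤ n) :
    hittingBtwn u (Set.Ioi r) 0 (π ω) ω = min (π ω) (hittingBtwn u (Set.Ioi r) 0 n ω) := by
  classical
  refine le_antisymm (le_min (hittingBtwn_le _) (hittingBtwn_apply_mono_right u _ 0 ω (hπn ω))) ?_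
  by_cases hle : π ω ≤ hittingBtwn u (Set.Ioi r) 0 n ω
  · rw [min_eq_left hle]
    by_cases h : ∃ j ∈ Set.Icc 0 (π ω), u j ω ∈ Set.Ioi r
    · refine hle.trans (Eq.le ?_)
      rw [← hittingBtwn_eq_hittingBtwn_of_exists (hπn ω) h]
    · simp only [hittingBtwn, if_neg h, le_rfl]
  · rw [min_eq_right (not_le.1 hle).le, ← hittingBtwn_eq_hittingBtwn_of_exists (hπn ω) _]
    rw [not_le, hittingBtwn_lt_iff _ (hπn ω)] at hle
    exact
      let ⟨j, hj₁, hj₂⟩ := hle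
      ⟨j, ⟨hj₁.1, hj₁.2.le⟩, hj₂⟩

theorem stoppedValue_stoppedValue_hit (f u : ℕ → Ω → ℝ) (π : Ω → ℕ∞) (r : ℝ) {n : ℕ}
    (hπn : ∀ ω, π ω ≤ n) :
    stoppedValue (fun i => stoppedValue f (fun ω => ((hittingBtwn u (Set.Ioi r) 0 i ω : ℕ) : ℕ∞))) π =
      stoppedValue f (fun ω => min (π ω) ((hittingBtwn u (Set.Ioi r) 0 n ω : ℕ) : ℕ∞)) := by
  ext1 ω
  simp only [stoppedValue]
  have hk := hπn ω
  obtain ⟨k, hk'⟩ := WithTop.ne_top_iff_exists.1 (ne_top_of_le_ne_top (WithTop.coe_ne_top) hk)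
  rw [← hk'] at hk ⊢
  have := hit_eq_min (u := u) (fun _ => k) r ω (n := n) (fun _ => WithTop.coe_le_coe.1 hk)
  show f (hittingBtwn u (Set.Ioi r) 0 k ω) ω =
    f (min (k : ℕ∞) ((hittingBtwn u (Set.Ioi r) 0 n ω : ℕ) : ℕ∞)).untopA ω
  rw [this]
  rcases le_total k (hittingBtwn u (Set.Ioi r) 0 n ω) with hle | hle
  · rw [min_eq_left hle, min_eq_left (by exact_mod_cast hle)]; rfl
  · rw [min_eq_right hle, min_eq_right (by exact_mod_cast hle)]; rfl

theorem Submartingale.stoppedValue_hit [IsFiniteMeasure μ] (hf : Submartingale f ℱ μ)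
    (hu : Adapted ℱ u) (r : ℝ) :
    Submartingale (fun i => stoppedValue f (fun ω => ((hittingBtwn u (Set.Ioi r) 0 i ω : ℕ) : ℕ∞))) ℱ μ := by
  rw [submartingale_iff_expected_stoppedValue_mono]
  · intro σ π hσ hπ hσ_le_π hπ_bdd
    obtain ⟨n, hπ_le_n⟩ := hπ_bdd
    simp_rw [stoppedValue_stoppedValue_hit f u σ r fun i => (hσ_le_π i).trans (hπ_le_n i)]
    simp_rw [stoppedValue_stoppedValue_hit f u π r hπ_le_n]
    refine hf.expected_stoppedValue_mono ?_ ?_ ?_ fun ω => (min_le_left _ _).trans (hπ_le_n ω)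
    · exact hσ.min (hu.isStoppingTime_hittingBtwn measurableSet_Ioi)
    · exact hπ.min (hu.isStoppingTime_hittingBtwn measurableSet_Ioi)
    · exact fun ω => min_le_min (hσ_le_π ω) le_rfl
  · exact fun i => stronglyMeasurable_stoppedValue_of_le hf.stronglyAdapted.progMeasurable_of_discrete
      (hu.isStoppingTime_hittingBtwn measurableSet_Ioi) fun ω => mod_cast hittingBtwn_le ω
  · exact fun i => integrable_stoppedValue _ (hu.isStoppingTime_hittingBtwn measurableSet_Ioi)
      hf.integrable (N := i) fun ω => WithTop.coe_le_coe.2 (hittingBtwn_le (u := u) (s := Set.Ioi r) (n := 0) (m := i) ω)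

theorem keyineq (a e H C V W tn sn : ℝ) (ha : 1 ≤ a) (he : 0 ≤ e) :
    (a * (1 + e))⁻¹ * ((1 + e) * H - V + W) +
      (-(C / (a * (1 + e))) + (tn + V / (a * (1 + e)))
        - (sn + (W + e * |C|) / (a * (1 + e)))) ≤
    (H - C) / a + tn - sn := by
  have ha0 : (0 : ℝ) < a := lt_of_lt_of_le one_pos ha
  have hb0 : (0 : ℝ) < a * (1 + e) := by nlinarith
  have key2 : ((1 + e) * H - C - e * |C|) / (a * (1 + e)) ≤ (H - C) / a := by
    rw [div_le_div_iff₀ hb0 ha0]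
    nlinarith [mul_nonneg (mul_nonneg ha0.le he) (sub_nonneg.2 (le_abs_self C))]
  have hid : (a * (1 + e))⁻¹ * ((1 + e) * H - V + W) +
      (-(C / (a * (1 + e))) + (tn + V / (a * (1 + e)))
        - (sn + (W + e * |C|) / (a * (1 + e)))) =
      ((1 + e) * H - C - e * |C|) / (a * (1 + e)) + tn - sn := by
    field_simp
    ring
  rw [hid]
  linarith [key2]

end RSaux

theorem robbins_siegmund_supermartingale_convergence
    {Ω : Type*} [inst : MeasurableSpace Ω] (μ : Measure Ω) [IsProbabilityMeasure μ]
    (F : ℕ → MeasurableSpace Ω) (hFmono : Monotone F) (hFle : ∀ k, F k ≤ inst)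
    (h v w : ℕ → Ω → ℝ) (η : ℕ → ℝ)
    (hint : ∀ k, Integrable (h k) μ)
    (vint : ∀ k, Integrable (v k) μ)
    (wint : ∀ k, Integrable (w k) μ)
    (hmeas : ∀ k, Measurable[F k] (h k))
    (vmeas : ∀ k, Measurable[F k] (v k))
    (wmeas : ∀ k, Measurable[F k] (w k))
    (hvnonneg : ∀ k ω, 0 ≤ v k ω)
    (hwnonneg : ∀ k ω, 0 ≤ w k ω)
    (hwsum : ∀ᵐ ω ∂μ, Summable fun k => w k ω)
    (hbddbelow : ∃ C : ℝ, ∀ k ω, C ≤ h k ω)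
    (hηnonneg : ∀ k, 0 ≤ η k) (hηsum : Summable η)
    (hineq : ∀ k, 1 ≤ k →
      ∀ᵐ ω ∂μ, (μ[h (k + 1) | F k]) ω ≤ (1 + η k) * h k ω - v k ω + w k ω) :
    ∀ᵐ ω ∂μ, (∃ l : ℝ, Tendsto (fun k => h k ω) atTop (𝓝 l)) ∧
      Summable (fun k => v k ω) := by
  classical
  obtain ⟨C, hC⟩ := hbddbelow
  -- the product sequence
  set A : ℕ → ℝ := fun n => ∏ j ∈ Finset.range n, (1 + η (j + 1)) with hAdef
  have hA1 : ∀ n, 1 ≤ A n := by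
    intro n
    show (1:ℝ) ≤ ∏ j ∈ Finset.range n, (1 + η (j + 1))
    calc (1:ℝ) = ∏ _j ∈ Finset.range n, (1:ℝ) := by simp
      _ ≤ ∏ j ∈ Finset.range n, (1 + η (j + 1)) :=
          Finset.prod_le_prod (by simp) (fun j _ => by linarith [hηnonneg (j + 1)])
  have hApos : ∀ n, 0 < A n := fun n => lt_of_lt_of_le one_pos (hA1 n)
  have hAsucc : ∀ n, A (n + 1) = A n * (1 + η (n + 1)) := fun n => Finset.prod_range_succ _ n
  have hAmono : Monotone A := monotone_nat_of_le_succ fun n => by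
    rw [hAsucc]; nlinarith [hApos n, hηnonneg (n + 1)]
  have hAbdd : ∀ n, A n ≤ Real.exp (∑' k, η k) := by
    intro n
    calc A n ≤ ∏ j ∈ Finset.range n, Real.exp (η (j + 1)) :=
          Finset.prod_le_prod (fun j _ => by linarith [hηnonneg (j + 1)])
            (fun j _ => by linarith [Real.add_one_le_exp (η (j + 1))])
      _ = Real.exp (∑ j ∈ Finset.range n, η (j + 1)) := (Real.exp_sum _ _).symm
      _ ≤ Real.exp (∑' k, η k) := by
          apply Real.exp_le_exp.2
          calc ∑ j ∈ Finset.range n, η (j + 1) ≤ ∑ j ∈ Finset.range (n + 1), η j := by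
                rw [Finset.sum_range_succ']; linarith [hηnonneg 0]
            _ ≤ ∑' k, η k := Summable.sum_le_tsum _ (fun i _ => hηnonneg i) hηsum
  have hAconv : ∃ L, Tendsto A atTop (𝓝 L) :=
    ⟨_, tendsto_atTop_ciSup hAmono ⟨Real.exp (∑' k, η k), by
      rintro x ⟨n, rfl⟩; exact hAbdd n⟩⟩
  -- auxiliary processes
  set w' : ℕ → Ω → ℝ := fun k ω => w k ω + η k * |C| with hw'def
  set X : ℕ → Ω → ℝ := fun n ω => (h (n + 1) ω - C) / A n with hXdef
  set t : ℕ → Ω → ℝ := fun n ω => ∑ j ∈ Finset.range n, v (j + 1) ω / A (j + 1) with htdef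
  set s : ℕ → Ω → ℝ := fun n ω => ∑ j ∈ Finset.range n, w' (j + 1) ω / A (j + 1) with hsdef
  set Y : ℕ → Ω → ℝ := fun n ω => X n ω + t n ω - s n ω with hYdef
  set 𝒢 : Filtration ℕ inst :=
    ⟨fun n => F (n + 1), fun i j hij => hFmono (Nat.succ_le_succ hij),
      fun n => hFle (n + 1)⟩ with h𝒢def
  have h𝒢 : ∀ n, 𝒢 n = F (n + 1) := fun n => rfl
  -- integrability
  have hw'int : ∀ k, Integrable (w' k) μ := fun k => (wint k).add (integrable_const _)
  have hXint : ∀ n, Integrable (X n) μ := fun n =>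
    ((hint (n + 1)).sub (integrable_const C)).div_const _
  have htint : ∀ n, Integrable (t n) μ := fun n =>
    integrable_finset_sum _ fun j _ => (vint (j + 1)).div_const _
  have hsint : ∀ n, Integrable (s n) μ := fun n =>
    integrable_finset_sum _ fun j _ => (hw'int (j + 1)).div_const _
  have hYint : ∀ n, Integrable (Y n) μ := fun n => ((hXint n).add (htint n)).sub (hsint n)
  -- measurability
  have hw'm : ∀ k, Measurable[F k] (w' k) := fun k => (wmeas k).add_const _
  have hXm : ∀ n, Measurable[F (n + 1)] (X n) := fun n =>
    ((hmeas (n + 1)).sub measurable_const).div_const _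
  have htm : ∀ {n m : ℕ}, n ≤ m + 1 → Measurable[F (m + 1)] (t n) := by
    intro n m hnm
    apply Finset.measurable_sum
    intro j hj
    have hj' : j + 1 ≤ m + 1 := by have := Finset.mem_range.1 hj; omega
    exact ((vmeas (j + 1)).mono (hFmono hj') le_rfl).div_const _
  have hsm : ∀ {n m : ℕ}, n ≤ m + 1 → Measurable[F (m + 1)] (s n) := by
    intro n m hnm
    apply Finset.measurable_sum
    intro j hj
    have hj' : j + 1 ≤ m + 1 := by have := Finset.mem_range.1 hj; omega
    exact ((hw'm (j + 1)).mono (hFmono hj') le_rfl).div_const _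
  have hYm : ∀ n, Measurable[F (n + 1)] (Y n) := fun n =>
    ((hXm n).add (htm (Nat.le_succ n))).sub (hsm (Nat.le_succ n))
  have hYadp : StronglyAdapted 𝒢 Y := fun n => (hYm n).stronglyMeasurable
  -- supermartingale step
  have hstep : ∀ n, μ[Y (n + 1) | 𝒢 n] ≤ᵐ[μ] Y n := by
    intro n
    have hc : (0:ℝ) ≤ (A (n + 1))⁻¹ := inv_nonneg.2 (hApos (n + 1)).le
    set B : Ω → ℝ := fun ω => -(C / A (n + 1)) + t (n + 1) ω - s (n + 1) ω with hBdef
    have hBm : StronglyMeasurable[F (n + 1)] B :=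
      (((htm le_rfl).const_add _).sub (hsm le_rfl)).stronglyMeasurable
    have hBint : Integrable B μ := ((integrable_const _).add (htint (n + 1))).sub (hsint (n + 1))
    have hrw : Y (n + 1) = (A (n + 1))⁻¹ • h (n + 2) + B := by
      funext ω
      show (h (n + 2) ω - C) / A (n + 1) + t (n + 1) ω - s (n + 1) ω =
        (A (n + 1))⁻¹ * h (n + 2) ω + (-(C / A (n + 1)) + t (n + 1) ω - s (n + 1) ω)
      ring
    have h1 : μ[Y (n + 1) | 𝒢 n] =ᵐ[μ]
        μ[(A (n + 1))⁻¹ • h (n + 2) | 𝒢 n] + μ[B | 𝒢 n] := by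
      rw [hrw]; exact condExp_add ((hint (n + 2)).smul _) hBint _
    have h2 : μ[(A (n + 1))⁻¹ • h (n + 2) | 𝒢 n] =ᵐ[μ]
        (A (n + 1))⁻¹ • μ[h (n + 2) | F (n + 1)] := condExp_smul _ _ _
    have h3 : μ[B | 𝒢 n] = B :=
      condExp_of_stronglyMeasurable (hFle (n + 1)) hBm hBint
    have hkey := hineq (n + 1) (Nat.succ_le_succ (Nat.zero_le n))
    filter_upwards [h1, h2, hkey] with ω hω1 hω2 hωk
    have h3ω : (μ[B | 𝒢 n]) ω = B ω := by rw [h3]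
    have e1 : (μ[Y (n + 1) | 𝒢 n]) ω =
        (A (n + 1))⁻¹ * (μ[h (n + 2) | F (n + 1)]) ω + B ω := by
      rw [hω1]
      simp only [Pi.add_apply, Pi.smul_apply, smul_eq_mul] at hω2 ⊢
      rw [hω2, h3ω]
    rw [e1]
    have H1 : (A (n + 1))⁻¹ * (μ[h (n + 2) | F (n + 1)]) ω ≤
        (A (n + 1))⁻¹ * ((1 + η (n + 1)) * h (n + 1) ω - v (n + 1) ω + w (n + 1) ω) :=
      mul_le_mul_of_nonneg_left hωk hc
    have hts : t (n + 1) ω = t n ω + v (n + 1) ω / A (n + 1) := Finset.sum_range_succ _ n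
    have hss : s (n + 1) ω = s n ω + (w (n + 1) ω + η (n + 1) * |C|) / A (n + 1) :=
      Finset.sum_range_succ _ n
    have key := RSaux.keyineq (A n) (η (n + 1)) (h (n + 1) ω) C (v (n + 1) ω) (w (n + 1) ω)
      (t n ω) (s n ω) (hA1 n) (hηnonneg (n + 1))
    rw [← hAsucc n] at key
    have hBω : B ω = -(C / A (n + 1)) + t (n + 1) ω - s (n + 1) ω := rfl
    have hYω : Y n ω = (h (n + 1) ω - C) / A n + t n ω - s n ω := rfl
    rw [hBω, hYω, hts, hss]
    calc (A (n + 1))⁻¹ * (μ[h (n + 2) | F (n + 1)]) ω +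
          (-(C / A (n + 1)) + (t n ω + v (n + 1) ω / A (n + 1)) -
            (s n ω + (w (n + 1) ω + η (n + 1) * |C|) / A (n + 1)))
        ≤ (A (n + 1))⁻¹ * ((1 + η (n + 1)) * h (n + 1) ω - v (n + 1) ω + w (n + 1) ω) +
          (-(C / A (n + 1)) + (t n ω + v (n + 1) ω / A (n + 1)) -
            (s n ω + (w (n + 1) ω + η (n + 1) * |C|) / A (n + 1))) := by linarith [H1]
      _ ≤ (h (n + 1) ω - C) / A n + t n ω - s n ω := key
  have hYsuper : Supermartingale Y 𝒢 μ := supermartingale_nat hYadp hYint hstep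
  have hsub : Submartingale (-Y) 𝒢 μ := hYsuper.neg
  set u' : ℕ → Ω → ℝ := fun n ω => s (n + 1) ω with hu'def
  have hu'adp : Adapted 𝒢 u' := fun n => hsm le_rfl
  set c₀ : ℝ := ∫ ω, Y 0 ω ∂μ with hc0def
  have hXnn : ∀ n ω, 0 ≤ X n ω := fun n ω =>
    div_nonneg (sub_nonneg.2 (hC (n + 1) ω)) (hApos n).le
  have htnn : ∀ n ω, 0 ≤ t n ω := fun n ω =>
    Finset.sum_nonneg fun j _ => div_nonneg (hvnonneg _ _) (hApos _).le
  have hw'nn : ∀ k ω, 0 ≤ w' k ω := fun k ω =>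
    add_nonneg (hwnonneg _ _) (mul_nonneg (hηnonneg _) (abs_nonneg _))
  have hnegY : ∀ m ω, -(Y m ω) ≤ s m ω := by
    intro m ω
    have h1 := hXnn m ω
    have h2 := htnn m ω
    show -(X m ω + t m ω - s m ω) ≤ s m ω
    linarith
  have hZconv : ∀ a : ℕ, ∀ᵐ ω ∂μ, ∃ c, Tendsto
      (fun n => stoppedValue (-Y) (fun ω => ((hittingBtwn u' (Set.Ioi (a : ℝ)) 0 n ω : ℕ) : ℕ∞)) ω) atTop (𝓝 c) := by
    intro a
    have hZsub : Submartingale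
        (fun n => stoppedValue (-Y) (fun ω => ((hittingBtwn u' (Set.Ioi (a : ℝ)) 0 n ω : ℕ) : ℕ∞))) 𝒢 μ :=
      RSaux.Submartingale.stoppedValue_hit hsub hu'adp _
    have hZle : ∀ n ω, stoppedValue (-Y) (fun ω => ((hittingBtwn u' (Set.Ioi (a : ℝ)) 0 n ω : ℕ) : ℕ∞)) ω ≤ (a : ℝ) := by
      intro n ω
      show (-Y) (hittingBtwn u' (Set.Ioi (a : ℝ)) 0 n ω) ω ≤ (a : ℝ)
      have hsm_le : s (hittingBtwn u' (Set.Ioi (a : ℝ)) 0 n ω) ω ≤ (a : ℝ) := by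
        cases' hm : hittingBtwn u' (Set.Ioi (a : ℝ)) 0 n ω with j
        · show (∑ j ∈ Finset.range 0, w' (j + 1) ω / A (j + 1)) ≤ (a : ℝ)
          simp
        · have hj : j < hittingBtwn u' (Set.Ioi (a : ℝ)) 0 n ω := by
            rw [hm]; exact j.lt_succ_self
          have hnm := notMem_of_lt_hittingBtwn hj (Nat.zero_le j)
          rw [Set.mem_Ioi, not_lt] at hnm
          exact hnm
      calc (-Y) (hittingBtwn u' (Set.Ioi (a : ℝ)) 0 n ω) ω
          = -(Y (hittingBtwn u' (Set.Ioi (a : ℝ)) 0 n ω) ω) := rfl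
        _ ≤ s (hittingBtwn u' (Set.Ioi (a : ℝ)) 0 n ω) ω := hnegY _ ω
        _ ≤ (a : ℝ) := hsm_le
    have hZint : ∀ n, Integrable (stoppedValue (-Y) (fun ω => ((hittingBtwn u' (Set.Ioi (a : ℝ)) 0 n ω : ℕ) : ℕ∞))) μ :=
      fun n => hZsub.integrable n
    have hZ0eq : stoppedValue (-Y) (fun ω => ((hittingBtwn u' (Set.Ioi (a : ℝ)) 0 0 ω : ℕ) : ℕ∞)) = fun ω => -(Y 0 ω) := by
      funext ω
      have h0 : hittingBtwn u' (Set.Ioi (a : ℝ)) 0 0 ω = 0 := Nat.le_zero.1 (hittingBtwn_le ω)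
      simp [stoppedValue, h0]
      rfl
    have hg : Submartingale
        (fun n => stoppedValue (-Y) (fun ω => ((hittingBtwn u' (Set.Ioi (a : ℝ)) 0 n ω : ℕ) : ℕ∞)) + fun _ => c₀) 𝒢 μ :=
      hZsub.add_martingale (martingale_const _ _ _)
    have hgint : ∀ n, ∫ ω, (stoppedValue (-Y) (fun ω => ((hittingBtwn u' (Set.Ioi (a : ℝ)) 0 n ω : ℕ) : ℕ∞)) ω + c₀) ∂μ =
        (∫ ω, stoppedValue (-Y) (fun ω => ((hittingBtwn u' (Set.Ioi (a : ℝ)) 0 n ω : ℕ) : ℕ∞)) ω ∂μ) + c₀ := by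
      intro n
      rw [integral_add (hZint n) (integrable_const _), integral_const]
      simp
    have hmono0 : ∀ n, (0 : ℝ) ≤
        ∫ ω, (stoppedValue (-Y) (fun ω => ((hittingBtwn u' (Set.Ioi (a : ℝ)) 0 n ω : ℕ) : ℕ∞)) ω + c₀) ∂μ := by
      intro n
      have hmn := hZsub.setIntegral_le (Nat.zero_le n) MeasurableSet.univ
      rw [setIntegral_univ, setIntegral_univ] at hmn
      have h0 : ∫ ω, stoppedValue (-Y) (fun ω => ((hittingBtwn u' (Set.Ioi (a : ℝ)) 0 0 ω : ℕ) : ℕ∞)) ω ∂μ = -c₀ := by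
        rw [hZ0eq, integral_neg]
      rw [hgint n]
      linarith
    have hbdd : ∀ n, eLpNorm
        (fun ω => stoppedValue (-Y) (fun ω => ((hittingBtwn u' (Set.Ioi (a : ℝ)) 0 n ω : ℕ) : ℕ∞)) ω + c₀) 1 μ ≤
        2 * ENNReal.ofReal ((a : ℝ) + |c₀|) := by
      intro n
      have hb := eLpNorm_one_le_of_le' ((hZint n).add (integrable_const _)) (hmono0 n)
        (Eventually.of_forall fun ω => by
          have := hZle n ω
          have := le_abs_self c₀
          show stoppedValue (-Y) (fun ω => ((hittingBtwn u' (Set.Ioi (a : ℝ)) 0 n ω : ℕ) : ℕ∞)) ω + c₀ ≤ (a : ℝ) + |c₀|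
          linarith)
      rw [measure_univ, mul_one] at hb
      exact hb
    have hcoe : ((2 * ENNReal.ofReal ((a : ℝ) + |c₀|)).toNNReal : ℝ≥0∞) =
        2 * ENNReal.ofReal ((a : ℝ) + |c₀|) := ENNReal.coe_toNNReal (by finiteness)
    have hconv := hg.exists_ae_tendsto_of_bdd
      (R := (2 * ENNReal.ofReal ((a : ℝ) + |c₀|)).toNNReal)
      (fun n => by rw [hcoe]; exact hbdd n)
    filter_upwards [hconv] with ω hω
    obtain ⟨c, hc⟩ := hω
    refine ⟨c - c₀, ?_⟩
    have := hc.sub_const c₀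
    simpa using this
  have hallZ : ∀ᵐ ω ∂μ, ∀ a : ℕ, ∃ c, Tendsto
      (fun n => stoppedValue (-Y) (fun ω => ((hittingBtwn u' (Set.Ioi (a : ℝ)) 0 n ω : ℕ) : ℕ∞)) ω) atTop (𝓝 c) :=
    ae_all_iff.2 hZconv
  obtain ⟨L, hL⟩ := hAconv
  filter_upwards [hwsum, hallZ] with ω hsw hz
  have hsw' : Summable (fun k => w' k ω) := hsw.add (hηsum.mul_right |C|)
  have htermnn : ∀ j, 0 ≤ w' (j + 1) ω / A (j + 1) := fun j =>
    div_nonneg (hw'nn _ _) (hApos _).le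
  have hterm : Summable (fun j => w' (j + 1) ω / A (j + 1)) := by
    apply Summable.of_nonneg_of_le htermnn (fun j => div_le_self (hw'nn _ _) (hA1 _))
      ((summable_nat_add_iff 1).2 hsw')
  have hstend : Tendsto (fun n => s n ω) atTop (𝓝 (∑' j, w' (j + 1) ω / A (j + 1))) :=
    hterm.hasSum.tendsto_sum_nat
  obtain ⟨a, ha⟩ := exists_nat_ge (∑' j, w' (j + 1) ω / A (j + 1))
  have hsle : ∀ m, s m ω ≤ (a : ℝ) := fun m =>
    le_trans (Summable.sum_le_tsum (Finset.range m) (fun i _ => htermnn i) hterm) ha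
  have hhit : ∀ n, hittingBtwn u' (Set.Ioi (a : ℝ)) 0 n ω = n := by
    intro n
    simp only [hittingBtwn]
    rw [if_neg]
    rintro ⟨j, -, hj⟩
    rw [Set.mem_Ioi] at hj
    exact absurd hj (not_lt.2 (hsle (j + 1)))
  obtain ⟨cz, hcz⟩ := hz a
  have hfun : (fun n => stoppedValue (-Y) (fun ω => ((hittingBtwn u' (Set.Ioi (a : ℝ)) 0 n ω : ℕ) : ℕ∞)) ω) =
      fun n => -(Y n ω) := by
    funext n
    simp [stoppedValue, hhit n]
  rw [hfun] at hcz
  have hYtend : Tendsto (fun n => Y n ω) atTop (𝓝 (-cz)) := by simpa using hcz.neg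
  have hvtermnn : ∀ j, 0 ≤ v (j + 1) ω / A (j + 1) := fun j =>
    div_nonneg (hvnonneg _ _) (hApos _).le
  obtain ⟨b, hb⟩ := (hYtend.add hstend).bddAbove_range
  have htle : ∀ n, (∑ j ∈ Finset.range n, v (j + 1) ω / A (j + 1)) ≤ b := by
    intro n
    have h1 : t n ω ≤ Y n ω + s n ω := by
      have := hXnn n ω
      show t n ω ≤ (X n ω + t n ω - s n ω) + s n ω
      linarith
    exact h1.trans (hb ⟨n, rfl⟩)
  have hvterm : Summable (fun j => v (j + 1) ω / A (j + 1)) :=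
    summable_of_sum_range_le hvtermnn htle
  have hvshift : Summable (fun j => v (j + 1) ω) := by
    apply Summable.of_nonneg_of_le (fun j => hvnonneg _ _) (fun j => ?_)
      (hvterm.mul_left (Real.exp (∑' k, η k)))
    calc v (j + 1) ω = v (j + 1) ω / A (j + 1) * A (j + 1) :=
          (div_mul_cancel₀ _ (hApos _).ne').symm
      _ ≤ v (j + 1) ω / A (j + 1) * Real.exp (∑' k, η k) :=
          mul_le_mul_of_nonneg_left (hAbdd _) (hvtermnn j)
      _ = Real.exp (∑' k, η k) * (v (j + 1) ω / A (j + 1)) := mul_comm _ _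
  have hvsum : Summable (fun k => v k ω) := (summable_nat_add_iff 1).1 hvshift
  have httend : Tendsto (fun n => t n ω) atTop (𝓝 (∑' j, v (j + 1) ω / A (j + 1))) :=
    hvterm.hasSum.tendsto_sum_nat
  have hXtend : Tendsto (fun n => X n ω) atTop
      (𝓝 (-cz - (∑' j, v (j + 1) ω / A (j + 1)) + ∑' j, w' (j + 1) ω / A (j + 1))) := by
    refine ((hYtend.sub httend).add hstend).congr fun n => ?_
    show (X n ω + t n ω - s n ω) - t n ω + s n ω = X n ω
    ring
  have hhtend : Tendsto (fun n => h (n + 1) ω) atTop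
      (𝓝 (L * (-cz - (∑' j, v (j + 1) ω / A (j + 1)) + ∑' j, w' (j + 1) ω / A (j + 1)) + C)) := by
    refine ((hL.mul hXtend).add_const C).congr fun n => ?_
    show A n * ((h (n + 1) ω - C) / A n) + C = h (n + 1) ω
    rw [mul_div_cancel₀ _ (hApos n).ne']
    ring
  exact ⟨⟨_, (tendsto_add_atTop_iff_nat 1).1 hhtend⟩, hvsum⟩
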